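/- Let (A_j)_{j ∈ ℕ} be matrices in ℝ^{n×n}, B ∈ ℝ^{n×m}, C ∈ ℝ^{q×n}, define G_0 = I_n and G_k = ∑_{j=0}^{k-1} A_j G_{k-1-j} for k ≥ 1, and fix K ≥ 1. Suppose x : ℕ → ℝ^n and u : ℕ → ℝ^m satisfy x[k+1] = ∑_{j=0}^{k} A_j x[k−j] + B u[k] for all k ≥ 0, and let the outputs be y[k] = C x[k] for 0 ≤ k ≤ K−1. If the observability Gramian W_o := ∑_{j=0}^{K-1} G_jᵀ Cᵀ C G_j is invertible, then the initial state is recovered by x[0] = W_o^{-1} · ∑_{k=0}^{K-1} G_kᵀ Cᵀ ( y[k] − ∑_{i=0}^{k-1} C G_{k-1-i} B u[i] ); in particular, the initial state is uniquely determined by the inputs and outputs. -/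
import Mathlib

open Matrix Finset

/-- State-transition matrices: `G_0 = I` and `G_k = ∑_{j=0}^{k-1} A_j G_{k-1-j}` for `k ≥ 1`. -/
noncomputable def Gmat {n : ℕ} (A : ℕ → Matrix (Fin n) (Fin n) ℝ) : ℕ → Matrix (Fin n) (Fin n) ℝ
  | 0 => 1
  | k + 1 => ∑ j ∈ Finset.range (k + 1), A j * Gmat A (k - j)
  decreasing_by exact Nat.lt_succ_of_le (Nat.sub_le _ _)

lemma sumMulVec {α n' m' : Type*} [NonUnitalNonAssocSemiring α] [Fintype m'] {ι : Type*}
    (s : Finset ι) (M : ι → Matrix n' m' α) (v : m' → α) :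
    (∑ i ∈ s, M i).mulVec v = ∑ i ∈ s, (M i).mulVec v := by
  induction s using Finset.cons_induction with
  | empty => simp [Matrix.zero_mulVec]
  | cons a s ha ih => simp [Finset.sum_cons, Matrix.add_mulVec, ih]

lemma mulVecSum {α n' m' : Type*} [NonUnitalNonAssocSemiring α] [Fintype m'] {ι : Type*}
    (s : Finset ι) (M : Matrix n' m' α) (v : ι → m' → α) :
    M.mulVec (∑ i ∈ s, v i) = ∑ i ∈ s, M.mulVec (v i) := by
  induction s using Finset.cons_induction with
  | empty => simp
  | cons a s ha ih => simp [Finset.sum_cons, Matrix.mulVec_add, ih]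

lemma tri {M : Type*} [AddCommMonoid M] (n : ℕ) (f : ℕ → ℕ → M) :
    ∑ j ∈ range n, ∑ i ∈ range (n - j), f j i = ∑ i ∈ range n, ∑ j ∈ range (n - i), f j i := by
  have key : ∀ (g : ℕ → ℕ → M), ∑ j ∈ range n, ∑ i ∈ range (n - j), g j i
      = ∑ j ∈ range n, ∑ i ∈ range n, if j + i < n then g j i else 0 := by
    intro g
    refine Finset.sum_congr rfl fun j hj => ?_
    rw [Finset.mem_range] at hj
    rw [Finset.sum_ite, Finset.sum_const_zero, add_zero]
    apply Finset.sum_congr ?_ fun _ _ => rfl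
    ext i
    simp only [Finset.mem_filter, Finset.mem_range]
    omega
  rw [key f, key (fun i j => f j i), Finset.sum_comm]
  refine Finset.sum_congr rfl fun i _ => Finset.sum_congr rfl fun j _ => ?_
  rw [Nat.add_comm]

lemma state_formula {n m : ℕ} (A : ℕ → Matrix (Fin n) (Fin n) ℝ)
    (B : Matrix (Fin n) (Fin m) ℝ) (x : ℕ → Fin n → ℝ) (u : ℕ → Fin m → ℝ)
    (hx : ∀ k : ℕ,
      x (k + 1) = ∑ j ∈ Finset.range (k + 1), (A j).mulVec (x (k - j)) + B.mulVec (u k)) :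
    ∀ k : ℕ, x k = (Gmat A k).mulVec (x 0)
      + ∑ i ∈ Finset.range k, (Gmat A (k - 1 - i) * B).mulVec (u i) := by
  intro k
  induction k using Nat.strong_induction_on with
  | _ k ih =>
    match k with
    | 0 => simp [Gmat]
    | k + 1 =>
      rw [hx k]
      have hsub : ∀ j ∈ Finset.range (k + 1), (A j).mulVec (x (k - j)) =
          (A j * Gmat A (k - j)).mulVec (x 0)
          + ∑ i ∈ Finset.range (k - j), (A j * (Gmat A (k - j - 1 - i) * B)).mulVec (u i) := by
        intro j hj
        rw [ih (k - j) (Nat.lt_succ_of_le (Nat.sub_le _ _)), Matrix.mulVec_add, mulVecSum]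
        congr 1
        · rw [Matrix.mulVec_mulVec]
        · exact Finset.sum_congr rfl fun i _ => Matrix.mulVec_mulVec _ _ _
      rw [Finset.sum_congr rfl hsub, Finset.sum_add_distrib]
      have h1 : (∑ j ∈ Finset.range (k + 1), (A j * Gmat A (k - j)).mulVec (x 0))
          = (Gmat A (k + 1)).mulVec (x 0) := by
        rw [← sumMulVec]
        rw [Gmat]
      have h2 : (∑ j ∈ Finset.range (k + 1), ∑ i ∈ Finset.range (k - j),
            (A j * (Gmat A (k - j - 1 - i) * B)).mulVec (u i)) + B.mulVec (u k)
          = ∑ i ∈ Finset.range (k + 1), (Gmat A (k + 1 - 1 - i) * B).mulVec (u i) := by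
        rw [Finset.sum_range_succ (fun i => (Gmat A (k + 1 - 1 - i) * B).mulVec (u i))]
        congr 1
        · rw [Finset.sum_range_succ, Nat.sub_self, Finset.range_zero, Finset.sum_empty, add_zero]
          rw [tri k (fun j i => (A j * (Gmat A (k - j - 1 - i) * B)).mulVec (u i))]
          refine Finset.sum_congr rfl fun i hi => ?_
          rw [Finset.mem_range] at hi
          rw [← sumMulVec]
          have hki : k + 1 - 1 - i = (k - i - 1) + 1 := by omega
          rw [hki, Gmat, Matrix.sum_mul]
          have hrange : k - i - 1 + 1 = k - i := by omega
          rw [hrange]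
          refine congrArg (fun M => Matrix.mulVec M (u i)) (Finset.sum_congr rfl fun j hj => ?_)
          rw [Finset.mem_range] at hj
          have h' : k - j - 1 - i = k - i - 1 - j := by omega
          rw [h', Matrix.mul_assoc]
        · simp [Gmat]
      rw [h1, add_assoc, h2]

theorem fos_observability (n m q K : ℕ) (hK : 1 ≤ K)
    (A : ℕ → Matrix (Fin n) (Fin n) ℝ) (B : Matrix (Fin n) (Fin m) ℝ)
    (C : Matrix (Fin q) (Fin n) ℝ)
    (x : ℕ → Fin n → ℝ) (u : ℕ → Fin m → ℝ)
    (hx : ∀ k : ℕ,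
      x (k + 1) = ∑ j ∈ Finset.range (k + 1), (A j).mulVec (x (k - j)) + B.mulVec (u k))
    (y : ℕ → Fin q → ℝ)
    (hy : ∀ k : ℕ, k ≤ K - 1 → y k = C.mulVec (x k))
    (Wo : Matrix (Fin n) (Fin n) ℝ)
    (hWo : Wo = ∑ j ∈ Finset.range K, (Gmat A j)ᵀ * Cᵀ * C * Gmat A j)
    (hWoInv : IsUnit Wo.det) :
    x 0 = Wo⁻¹.mulVec (∑ k ∈ Finset.range K,
      ((Gmat A k)ᵀ * Cᵀ).mulVec
        (y k - ∑ i ∈ Finset.range k, (C * Gmat A (k - 1 - i) * B).mulVec (u i))) := by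
  have hstate := state_formula A B x u hx
  have hterm : ∀ k ∈ Finset.range K,
      ((Gmat A k)ᵀ * Cᵀ).mulVec
        (y k - ∑ i ∈ Finset.range k, (C * Gmat A (k - 1 - i) * B).mulVec (u i))
      = ((Gmat A k)ᵀ * Cᵀ * C * Gmat A k).mulVec (x 0) := by
    intro k hk
    rw [Finset.mem_range] at hk
    rw [hy k (by omega), hstate k, Matrix.mulVec_add, mulVecSum]
    have : (∑ i ∈ Finset.range k, C.mulVec ((Gmat A (k - 1 - i) * B).mulVec (u i)))
        = ∑ i ∈ Finset.range k, (C * Gmat A (k - 1 - i) * B).mulVec (u i) := by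
      refine Finset.sum_congr rfl fun i _ => ?_
      rw [Matrix.mulVec_mulVec, Matrix.mul_assoc]
    rw [this, add_sub_cancel_right, Matrix.mulVec_mulVec, Matrix.mulVec_mulVec]
  rw [Finset.sum_congr rfl hterm, ← sumMulVec, ← hWo, Matrix.mulVec_mulVec,
    Matrix.nonsing_inv_mul Wo hWoInv, Matrix.one_mulVec]
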